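/- If f̃_{t,δ}(x,y) < ε, then the Prokhorov distance between the t-empirical measures of x and y satisfies D_P(μ_{x,t}, μ_{y,t}) < max{δ, 2ε}. -/

import Mathlib

open MeasureTheory Filter Set Topology
open scoped ENNReal symmDiff

section FK

structure IsFlow {X : Type*} [TopologicalSpace X] (Φ : ℝ → X → X) : Prop where
  cont : Continuous fun p : ℝ × X => Φ p.1 p.2
  map_zero : ∀ x, Φ 0 x = x
  map_add : ∀ t s x, Φ (t + s) x = Φ s (Φ t x)

variable {X : Type*} [MetricSpace X]

/-- `x` and `y` are `(t,ε,δ)`-matchable: there are measurable `A, A' ⊆ [0,t]` of Lebesgue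
measure `> (1-ε)t` and an increasing absolutely continuous onto map `h : A → A'`
(with a.e. derivative `h'`) with `|h' - 1| < ε` and `d(φ^s x, φ^{h s} y) < δ` on `A`. -/
def Matchable (Φ : ℝ → X → X) (x y : X) (t ε δ : ℝ) : Prop :=
  ∃ (A A' : Set ℝ) (h h' : ℝ → ℝ),
    MeasurableSet A ∧ MeasurableSet A' ∧
    A ⊆ Icc 0 t ∧ A' ⊆ Icc 0 t ∧
    ENNReal.ofReal ((1 - ε) * t) < volume A ∧
    ENNReal.ofReal ((1 - ε) * t) < volume A' ∧
    MapsTo h A A' ∧ SurjOn h A A' ∧ StrictMonoOn h A ∧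
    (∀ B ⊆ A, MeasurableSet B → volume (h '' B) = ENNReal.ofReal (∫ s in B, h' s)) ∧
    (∀ s ∈ A, |h' s - 1| < ε) ∧
    (∀ s ∈ A, dist (Φ s x) (Φ (h s) y) < δ)

/-- The `(t,δ)`-gap `f̃_{t,δ}(x,y)`; by convention it equals `1` when no matching exists. -/
noncomputable def fkGap (Φ : ℝ → X → X) (t δ : ℝ) (x y : X) : ℝ :=
  sInf ({ε : ℝ | 0 < ε ∧ Matchable Φ x y t ε δ} ∪ {1})

/-- `f̃_δ(x,y) = limsup_{t → ∞} f̃_{t,δ}(x,y)`. -/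
noncomputable def fkDist (Φ : ℝ → X → X) (δ : ℝ) (x y : X) : ℝ :=
  Filter.limsup (fun t => fkGap Φ t δ x y) Filter.atTop

/-- The Feldman–Katok pseudometric for flows. -/
noncomputable def rhoFK (Φ : ℝ → X → X) (x y : X) : ℝ :=
  sInf {δ : ℝ | 0 < δ ∧ fkDist Φ δ x y < δ}

/-- Discrete `(n,δ)`-matching of cardinality `k` for a map `T`. -/
def DMatching (T : X → X) (x y : X) (n : ℕ) (δ : ℝ) (k : ℕ) : Prop :=
  ∃ (D D' : Finset ℕ) (π : ℕ → ℕ),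
    D ⊆ Finset.range n ∧ D' ⊆ Finset.range n ∧ D.card = k ∧
    Set.BijOn π ↑D ↑D' ∧ StrictMonoOn π ↑D ∧
    ∀ i ∈ D, dist (T^[i] x) (T^[π i] y) < δ

/-- The discrete `(n,δ)`-gap `f̄_{n,δ}(x,y)`. -/
noncomputable def dGap (T : X → X) (n : ℕ) (δ : ℝ) (x y : X) : ℝ :=
  1 - ((sSup {k : ℕ | DMatching T x y n δ k} : ℕ) : ℝ) / n

/-- `f̄_δ(x,y) = limsup_{n → ∞} f̄_{n,δ}(x,y)`. -/
noncomputable def dFKdist (T : X → X) (δ : ℝ) (x y : X) : ℝ :=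
  Filter.limsup (fun n : ℕ => dGap T n δ x y) Filter.atTop

/-- The discrete Feldman–Katok pseudometric. -/
noncomputable def dRhoFK (T : X → X) (x y : X) : ℝ :=
  sInf {δ : ℝ | 0 < δ ∧ dFKdist T δ x y ≤ δ}

variable [MeasurableSpace X] [BorelSpace X]

/-- The `t`-empirical measure `μ_{x,t} = (1/t) ∫_0^t δ_{φ^s x} ds`. -/
noncomputable def empMeasure (Φ : ℝ → X → X) (x : X) (t : ℝ) : Measure X :=
  (ENNReal.ofReal (1 / t)) • Measure.map (fun s => Φ s x) (volume.restrict (Icc 0 t))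

/-- `x` is generic for `μ`: empirical measures converge to `μ` in the weak* topology. -/
def Generic (Φ : ℝ → X → X) (μ : Measure X) (x : X) : Prop :=
  ∀ f : C(X, ℝ), Tendsto (fun t => ∫ z, f z ∂(empMeasure Φ x t)) atTop (𝓝 (∫ z, f z ∂μ))

def FlowInvariant (Φ : ℝ → X → X) (μ : Measure X) : Prop :=
  ∀ t : ℝ, MeasurePreserving (Φ t) μ μ

def FlowErgodic (Φ : ℝ → X → X) (μ : Measure X) : Prop :=
  FlowInvariant Φ μ ∧
    ∀ A : Set X, MeasurableSet A → (∀ t, Φ t ⁻¹' A = A) → μ A = 0 ∨ μ A = 1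

/-- The Prokhorov metric. -/
noncomputable def prokhorov (μ ν : Measure X) : ℝ :=
  sInf {ε : ℝ | 0 < ε ∧ ∀ B : Set X, MeasurableSet B →
    μ B ≤ ν (Metric.thickening ε B) + ENNReal.ofReal ε}

/-- A finite Borel partition of `X`, indexed by `ℕ` with all but finitely many cells empty. -/
structure BPartition (X : Type*) [MeasurableSpace X] where
  cells : ℕ → Set X
  measurable : ∀ j, MeasurableSet (cells j)
  disj : Pairwise (Function.onFun Disjoint cells)
  cover : ⋃ j, cells j = Set.univ
  finite : ∃ n, ∀ j, n ≤ j → cells j = ∅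

/-- The partition pseudometric `d_μ(P,Q)` (infimum over orderings of
`μ {x : P(x) ≠ Q(x)}`). -/
noncomputable def dPart (μ : Measure X) (P Q : ℕ → Set X) : ℝ :=
  ⨅ σ : Equiv.Perm ℕ, (μ (⋃ j, P j \ Q (σ j))).toReal

/-- `(t,ε,P)`-matchability with respect to a partition `P` (Ratner). -/
def PMatchable (Φ : ℝ → X → X) (P : ℕ → Set X) (x y : X) (t ε : ℝ) : Prop :=
  ∃ (A A' : Set ℝ) (h h' : ℝ → ℝ),
    MeasurableSet A ∧ MeasurableSet A' ∧
    A ⊆ Icc 0 t ∧ A' ⊆ Icc 0 t ∧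
    ENNReal.ofReal ((1 - ε) * t) < volume A ∧
    ENNReal.ofReal ((1 - ε) * t) < volume A' ∧
    MapsTo h A A' ∧ SurjOn h A A' ∧ StrictMonoOn h A ∧
    (∀ B ⊆ A, MeasurableSet B → volume (h '' B) = ENNReal.ofReal (∫ s in B, h' s)) ∧
    (∀ s ∈ A, |h' s - 1| < ε) ∧
    (∀ s ∈ A, ∀ j, Φ s x ∈ P j ↔ Φ (h s) y ∈ P j)

/-- `f_t(x,y,P)`. -/
noncomputable def fPart (Φ : ℝ → X → X) (P : ℕ → Set X) (t : ℝ) (x y : X) : ℝ :=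
  sInf ({ε : ℝ | 0 < ε ∧ PMatchable Φ P x y t ε} ∪ {1})

/-- The `(t,P)`-ball of radius `ε` centered at `x`. -/
def PBall (Φ : ℝ → X → X) (P : ℕ → Set X) (t ε : ℝ) (x : X) : Set X :=
  {y | fPart Φ P t x y < ε}

/-- `K_t(ε,P)`: minimal cardinality of an `(ε,t,P)`-cover (`⊤` if none exists). -/
noncomputable def Kt (μ : Measure X) (Φ : ℝ → X → X) (P : ℕ → Set X) (ε t : ℝ) : ℝ≥0∞ :=
  sInf ((fun C : Finset X => (C.card : ℝ≥0∞)) ''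
    {C : Finset X | ENNReal.ofReal (1 - ε) < μ (⋃ x ∈ C, PBall Φ P t ε x)})

/-- `β(u,ε,P) = liminf_{t→∞} log K_t(ε,P) / u(t)`. -/
noncomputable def betaU (μ : Measure X) (Φ : ℝ → X → X) (P : ℕ → Set X) (u : ℝ → ℝ)
    (ε : ℝ) : EReal :=
  Filter.liminf (fun t => ENNReal.log (Kt μ Φ P ε t) / (ENNReal.ofReal (u t) : EReal))
    Filter.atTop

/-- `e(u,P) = limsup_{ε→0⁺} β(u,ε,P)`. -/
noncomputable def eUP (μ : Measure X) (Φ : ℝ → X → X) (P : ℕ → Set X) (u : ℝ → ℝ) : EReal :=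
  Filter.limsup (fun ε => betaU μ Φ P u ε) (𝓝[>] (0 : ℝ))

/-- `e(Φ,u) = sup_P e(u,P)`. -/
noncomputable def ePhi (μ : Measure X) (Φ : ℝ → X → X) (u : ℝ → ℝ) : EReal :=
  ⨆ P : BPartition X, eUP μ Φ P.cells u

end FK


theorem stmt2 {X : Type*} [MetricSpace X] [CompactSpace X] [MeasurableSpace X] [BorelSpace X] (Φ : ℝ → X → X) (hΦ : IsFlow Φ) (x y : X)
    (t δ ε : ℝ) (ht : 1 < t) (hδ : 0 < δ)
    (h : fkGap Φ t δ x y < ε) :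
    prokhorov (empMeasure Φ x t) (empMeasure Φ y t) < max δ (2 * ε) := by
  classical
  have ht0 : (0:ℝ) < t := lt_trans one_pos ht
  have hmx : Measurable fun s : ℝ => Φ s x :=
    (hΦ.cont.comp (continuous_id.prodMk continuous_const)).measurable
  have hmy : Measurable fun s : ℝ => Φ s y :=
    (hΦ.cont.comp (continuous_id.prodMk continuous_const)).measurable
  have hEx : ∀ B : Set X, MeasurableSet B → empMeasure Φ x t B
      = ENNReal.ofReal (1/t) * volume ((fun s : ℝ => Φ s x) ⁻¹' B ∩ Icc 0 t) := by
    intro B hB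
    rw [empMeasure, Measure.smul_apply, smul_eq_mul, Measure.map_apply hmx hB,
      Measure.restrict_apply (hmx hB)]
  have hEy : ∀ B : Set X, MeasurableSet B → empMeasure Φ y t B
      = ENNReal.ofReal (1/t) * volume ((fun s : ℝ => Φ s y) ⁻¹' B ∩ Icc 0 t) := by
    intro B hB
    rw [empMeasure, Measure.smul_apply, smul_eq_mul, Measure.map_apply hmy hB,
      Measure.restrict_apply (hmy hB)]
  have hBddP : BddBelow {ε₀ : ℝ | 0 < ε₀ ∧ ∀ B : Set X, MeasurableSet B →
      empMeasure Φ x t B ≤ empMeasure Φ y t (Metric.thickening ε₀ B) + ENNReal.ofReal ε₀} :=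
    ⟨0, fun z hz => hz.1.le⟩
  have htop : empMeasure Φ x t Set.univ ≤ 1 := by
    rw [hEx Set.univ MeasurableSet.univ]
    simp only [Set.preimage_univ, Set.univ_inter, Real.volume_Icc, sub_zero]
    rw [← ENNReal.ofReal_mul (by positivity), one_div_mul_cancel ht0.ne', ENNReal.ofReal_one]
  have htriv : ∀ ε₀ : ℝ, 1 ≤ ε₀ → (0 < ε₀ ∧ ∀ B : Set X, MeasurableSet B →
      empMeasure Φ x t B ≤ empMeasure Φ y t (Metric.thickening ε₀ B) + ENNReal.ofReal ε₀) := by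
    intro ε₀ h1
    refine ⟨lt_of_lt_of_le one_pos h1, fun B hB => ?_⟩
    calc empMeasure Φ x t B ≤ empMeasure Φ x t Set.univ := measure_mono (Set.subset_univ _)
      _ ≤ 1 := htop
      _ ≤ ENNReal.ofReal ε₀ := by
          rw [← ENNReal.ofReal_one]; exact ENNReal.ofReal_le_ofReal h1
      _ ≤ _ := le_add_self
  -- extract a witness ε' < ε
  have hbdd : BddBelow ({ε' : ℝ | 0 < ε' ∧ Matchable Φ x y t ε' δ} ∪ {1}) := by
    refine ⟨0, fun z hz => ?_⟩
    rcases hz with hz | hz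
    · exact hz.1.le
    · rw [Set.mem_singleton_iff] at hz; simp [hz]
  obtain ⟨ε', hε'mem, hε'ε⟩ :
      ∃ ε' ∈ ({ε' : ℝ | 0 < ε' ∧ Matchable Φ x y t ε' δ} ∪ {1} : Set ℝ), ε' < ε := by
    unfold fkGap at h
    exact (csInf_lt_iff hbdd ⟨1, Or.inr rfl⟩).mp h
  rcases hε'mem with hS | hone
  swap
  · -- ε' = 1, so ε > 1 and max δ (2ε) > 2
    rw [Set.mem_singleton_iff] at hone
    subst hone
    have hM : (2:ℝ) < max δ (2*ε) := lt_of_lt_of_le (by linarith) (le_max_right _ _)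
    set ε₀ := (1 + max δ (2*ε))/2 with hε₀def
    have h1 : (1:ℝ) ≤ ε₀ := by rw [hε₀def]; linarith
    have hlt : ε₀ < max δ (2*ε) := by rw [hε₀def]; linarith
    exact lt_of_le_of_lt (csInf_le hBddP (htriv ε₀ h1)) hlt
  obtain ⟨hε'pos, A, A', m, m', hAm, hA'm, hAsub, hA'sub, hAvol, hA'vol, hmaps, hsurj,
    hsmono, hform, hder, hdist⟩ : 0 < ε' ∧ _ := hS
  have h2εmax : 2*ε' < max δ (2*ε) :=
    lt_of_lt_of_le (by linarith) (le_max_right _ _)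
  by_cases hhalf : (1:ℝ)/2 ≤ ε'
  · -- trivial route: 2ε' ≥ 1
    exact lt_of_le_of_lt (csInf_le hBddP (htriv (2*ε') (by linarith))) h2εmax
  push_neg at hhalf
  -- monotone extension g of m
  have hmono' : MonotoneOn m A := hsmono.monotoneOn
  have hbddm : ∀ u : ℝ, BddAbove (m '' (A ∩ Iic u)) := by
    intro u
    refine ⟨t, ?_⟩
    rintro z ⟨s, ⟨hsA, _⟩, rfl⟩
    exact (hA'sub (hmaps hsA)).2
  set g : ℝ → ℝ := fun u => sSup (m '' (A ∩ Iic u)) with hgdef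
  have hnonneg : ∀ u, 0 ≤ g u := by
    intro u
    by_cases hne : (A ∩ Iic u).Nonempty
    · obtain ⟨s, hs⟩ := hne
      exact le_trans (hA'sub (hmaps hs.1)).1 (le_csSup (hbddm u) ⟨s, hs, rfl⟩)
    · rw [Set.not_nonempty_iff_eq_empty] at hne
      simp [hgdef, hne, Real.sSup_empty]
  have hgmono : Monotone g := by
    intro u v huv
    by_cases hne : (A ∩ Iic u).Nonempty
    · exact csSup_le_csSup (hbddm v) (hne.image _)
        (Set.image_mono (Set.inter_subset_inter_right _ (Iic_subset_Iic.mpr huv)))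
    · rw [Set.not_nonempty_iff_eq_empty] at hne
      simp only [hgdef, hne, Set.image_empty, Real.sSup_empty]
      exact hnonneg v
  have hgA : ∀ s ∈ A, g s = m s := by
    intro s hs
    refine IsGreatest.csSup_eq ⟨⟨s, ⟨hs, le_refl s⟩, rfl⟩, ?_⟩
    rintro z ⟨s', ⟨hs', hle⟩, rfl⟩
    exact hmono' hs' hs hle
  have hgm : Measurable g := hgmono.measurable
  set D : ℝ → ℝ := fun s => dist (Φ s x) (Φ (g s) y) with hDdef
  have hDm : Measurable D :=
    Measurable.dist hmx (hΦ.cont.measurable.comp (hgm.prodMk measurable_const))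
  set T : ℕ → Set ℝ := fun n => A ∩ D ⁻¹' (Iic (δ - δ/(n+1))) with hTdef
  have hTm : ∀ n, MeasurableSet (T n) := fun n => hAm.inter (hDm measurableSet_Iic)
  have hTmono : Monotone T := by
    intro n k hnk
    apply Set.inter_subset_inter_right
    apply Set.preimage_mono
    apply Iic_subset_Iic.mpr
    have hdd : δ / (↑k+1) ≤ δ / (↑n+1) := by
      have hc : (n:ℝ) ≤ k := Nat.cast_le.mpr hnk
      apply div_le_div_of_nonneg_left hδ.le (by positivity) (by linarith)
    linarith
  have hTunion : ⋃ n, T n = A := by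
    apply Set.Subset.antisymm (Set.iUnion_subset fun n => Set.inter_subset_left)
    intro s hs
    have hdlt : D s < δ := by
      show dist (Φ s x) (Φ (g s) y) < δ
      rw [hgA s hs]
      exact hdist s hs
    have hpos : 0 < (δ - D s)/δ := div_pos (by linarith) hδ
    obtain ⟨n, hn⟩ := exists_nat_one_div_lt hpos
    refine Set.mem_iUnion.mpr ⟨n, hs, ?_⟩
    simp only [Set.mem_preimage, mem_Iic]
    have hlt : δ / (↑n+1) < δ - D s := by
      calc δ / (↑n+1) = δ * (1/(↑n+1)) := by ring
        _ < δ * ((δ - D s)/δ) := by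
            apply mul_lt_mul_of_pos_left hn hδ
        _ = δ - D s := by field_simp
    linarith
  have hvolsup : volume A = ⨆ n, volume (T n) := by
    rw [← hTunion]
    exact Directed.measure_iUnion hTmono.directed_le
  obtain ⟨n, hn⟩ := lt_iSup_iff.mp (hvolsup ▸ hAvol)
  set δ'' := δ - δ/(n+1) with hδ''def
  have hδ''lt : δ'' < δ := by
    have : (0:ℝ) < δ/(n+1) := by positivity
    rw [hδ''def]; linarith
  have htAsubA : T n ⊆ A := Set.inter_subset_left
  have htAsubI : T n ⊆ Icc 0 t := htAsubA.trans hAsub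
  have htAdist : ∀ s ∈ T n, dist (Φ s x) (Φ (m s) y) ≤ δ'' := by
    intro s hs
    have h2 : D s ≤ δ'' := hs.2
    rwa [show D s = dist (Φ s x) (Φ (g s) y) from rfl, hgA s hs.1] at h2
  have hIccfin : volume (Icc (0:ℝ) t) ≠ ⊤ := by
    rw [Real.volume_Icc]; exact ENNReal.ofReal_ne_top
  have htAfin : volume (T n) ≠ ⊤ :=
    fun hc => hIccfin (top_le_iff.mp (hc ▸ measure_mono htAsubI))
  -- integrability of m' on A
  have hIntA : MeasureTheory.IntegrableOn m' A volume := by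
    by_contra hni
    have h0 : ∫ s in A, m' s = 0 := MeasureTheory.integral_undef hni
    have hzero := hform A Set.Subset.rfl hAm
    rw [h0, ENNReal.ofReal_zero] at hzero
    have hA'pos : 0 < volume A' :=
      lt_trans (ENNReal.ofReal_pos.mpr (by nlinarith)) hA'vol
    have hsub2 : volume A' ≤ volume (m '' A) := measure_mono hsurj
    rw [hzero] at hsub2
    exact absurd (le_antisymm hsub2 zero_le) hA'pos.ne'
  have key : ∀ B : Set ℝ, B ⊆ A → MeasurableSet B →
      ENNReal.ofReal ((1-ε') * (volume B).toReal) ≤ volume (m '' B) := by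
    intro B hBA hBm
    rw [hform B hBA hBm]
    apply ENNReal.ofReal_le_ofReal
    have hBfin : volume B ≠ ⊤ :=
      fun hc => hIccfin (top_le_iff.mp (hc ▸ measure_mono (hBA.trans hAsub)))
    have hint : MeasureTheory.IntegrableOn m' B volume := hIntA.mono_set hBA
    have hconst : MeasureTheory.IntegrableOn (fun _ : ℝ => (1-ε')) B volume := by
      apply (MeasureTheory.integrableOn_const_iff (C := 1-ε')).mpr
      exact Or.inr (lt_top_iff_ne_top.mpr hBfin)
    calc (1-ε') * (volume B).toReal = ∫ _ in B, (1-ε') := by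
          rw [MeasureTheory.setIntegral_const, smul_eq_mul, mul_comm]; rfl
      _ ≤ ∫ s in B, m' s := by
          apply MeasureTheory.setIntegral_mono_on hconst hint hBm
          intro s hs
          have := hder s (hBA hs)
          rw [abs_lt] at this
          linarith [this.1]
  clear_value δ''
  -- choose ε₀
  set ε₀ := max ((δ + δ'')/2) (2*ε') with hε₀def
  clear_value ε₀
  have hε₀pos : 0 < ε₀ := by
    rw [hε₀def]; exact lt_of_lt_of_le (by linarith) (le_max_right _ _)
  have hε₀lt : ε₀ < max δ (2*ε) := by
    rw [hε₀def]
    apply max_lt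
    · exact lt_of_lt_of_le (by linarith) (le_max_left _ _)
    · exact h2εmax
  have hδ''ε₀ : δ'' < ε₀ := by
    rw [hε₀def]; exact lt_of_lt_of_le (by linarith) (le_max_left _ _)
  have h2ε'ε₀ : 2*ε' ≤ ε₀ := by rw [hε₀def]; exact le_max_right _ _
  -- the Prokhorov condition for ε₀
  have hcond : ∀ B : Set X, MeasurableSet B →
      empMeasure Φ x t B ≤ empMeasure Φ y t (Metric.thickening ε₀ B) + ENNReal.ofReal ε₀ := by
    intro B hB
    rw [hEx B hB, hEy _ Metric.isOpen_thickening.measurableSet]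
    set C := T n ∩ (fun s : ℝ => Φ s x) ⁻¹' B with hCdef
    have hCm : MeasurableSet C := (hTm n).inter (hmx hB)
    have hCA : C ⊆ A := Set.inter_subset_left.trans htAsubA
    have hCfin : volume C ≠ ⊤ :=
      fun hc => hIccfin (top_le_iff.mp (hc ▸ measure_mono (hCA.trans hAsub)))
    -- step a
    have hstepa : volume ((fun s : ℝ => Φ s x) ⁻¹' B ∩ Icc 0 t)
        ≤ volume C + volume (Icc 0 t \ T n) := by
      refine le_trans (measure_mono ?_) (measure_union_le _ _)
      intro s hs
      by_cases hstA : s ∈ T n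
      · exact Or.inl ⟨hstA, hs.1⟩
      · exact Or.inr ⟨hs.2, hstA⟩
    -- step b
    have hstepb : volume (Icc 0 t \ T n) ≤ ENNReal.ofReal (ε' * t) := by
      rw [measure_diff htAsubI (hTm n).nullMeasurableSet htAfin, Real.volume_Icc, sub_zero]
      calc ENNReal.ofReal t - volume (T n)
          ≤ ENNReal.ofReal t - ENNReal.ofReal ((1-ε')*t) := tsub_le_tsub_left hn.le _
        _ = ENNReal.ofReal (t - (1-ε')*t) := (ENNReal.ofReal_sub _ (by nlinarith)).symm
        _ ≤ ENNReal.ofReal (ε' * t) := ENNReal.ofReal_le_ofReal (by ring_nf; linarith)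
    -- step c
    have hCt : (volume C).toReal ≤ t := by
      have h1 : volume C ≤ ENNReal.ofReal t := by
        rw [← sub_zero t, ← Real.volume_Icc]
        exact measure_mono (hCA.trans hAsub)
      calc (volume C).toReal ≤ (ENNReal.ofReal t).toReal :=
            ENNReal.toReal_mono ENNReal.ofReal_ne_top h1
        _ = t := ENNReal.toReal_ofReal ht0.le
    have hstepc : volume C ≤ volume (m '' C) + ENNReal.ofReal (ε' * t) := by
      calc volume C = ENNReal.ofReal ((volume C).toReal) := (ENNReal.ofReal_toReal hCfin).symm
        _ ≤ ENNReal.ofReal ((1-ε') * (volume C).toReal + ε' * t) :=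
            ENNReal.ofReal_le_ofReal (by nlinarith [ENNReal.toReal_nonneg (a := volume C)])
        _ ≤ ENNReal.ofReal ((1-ε') * (volume C).toReal) + ENNReal.ofReal (ε' * t) :=
            ENNReal.ofReal_add_le
        _ ≤ volume (m '' C) + ENNReal.ofReal (ε' * t) :=
            add_le_add_left (key C hCA hCm) _
    -- step d
    have hstepd : m '' C ⊆ (fun s : ℝ => Φ s y) ⁻¹' (Metric.thickening ε₀ B) ∩ Icc 0 t := by
      rintro u ⟨s, hsC, rfl⟩
      refine ⟨Metric.mem_thickening_iff.mpr ⟨Φ s x, hsC.2, ?_⟩, hA'sub (hmaps (hCA hsC))⟩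
      rw [dist_comm]
      exact lt_of_le_of_lt (htAdist s hsC.1) hδ''ε₀
    -- combine
    have hmain : volume ((fun s : ℝ => Φ s x) ⁻¹' B ∩ Icc 0 t)
        ≤ volume ((fun s : ℝ => Φ s y) ⁻¹' (Metric.thickening ε₀ B) ∩ Icc 0 t)
          + ENNReal.ofReal (ε₀ * t) := by
      calc volume ((fun s : ℝ => Φ s x) ⁻¹' B ∩ Icc 0 t)
          ≤ volume C + volume (Icc 0 t \ T n) := hstepa
        _ ≤ (volume (m '' C) + ENNReal.ofReal (ε' * t)) + ENNReal.ofReal (ε' * t) :=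
            add_le_add hstepc hstepb
        _ = volume (m '' C) + (ENNReal.ofReal (ε' * t) + ENNReal.ofReal (ε' * t)) := by
            rw [add_assoc]
        _ ≤ volume ((fun s : ℝ => Φ s y) ⁻¹' (Metric.thickening ε₀ B) ∩ Icc 0 t)
              + ENNReal.ofReal (ε₀ * t) := by
            apply add_le_add (measure_mono hstepd)
            rw [← ENNReal.ofReal_add (by positivity) (by positivity)]
            exact ENNReal.ofReal_le_ofReal (by nlinarith)
    calc ENNReal.ofReal (1/t) * volume ((fun s : ℝ => Φ s x) ⁻¹' B ∩ Icc 0 t)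
        ≤ ENNReal.ofReal (1/t) *
            (volume ((fun s : ℝ => Φ s y) ⁻¹' (Metric.thickening ε₀ B) ∩ Icc 0 t)
              + ENNReal.ofReal (ε₀ * t)) := mul_le_mul_right hmain _
      _ = ENNReal.ofReal (1/t) *
            volume ((fun s : ℝ => Φ s y) ⁻¹' (Metric.thickening ε₀ B) ∩ Icc 0 t)
            + ENNReal.ofReal (1/t) * ENNReal.ofReal (ε₀ * t) := mul_add _ _ _
      _ = ENNReal.ofReal (1/t) *
            volume ((fun s : ℝ => Φ s y) ⁻¹' (Metric.thickening ε₀ B) ∩ Icc 0 t)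
            + ENNReal.ofReal ε₀ := by
          rw [← ENNReal.ofReal_mul (by positivity)]
          congr 1
          rw [show (1/t) * (ε₀ * t) = ε₀ by field_simp]
  exact lt_of_le_of_lt (csInf_le hBddP ⟨hε₀pos, hcond⟩) hε₀lt
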